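/- Let ε > 0, α > 0, and let a = (a_k)_{k≥1} and b = (b_k)_{k≥1} be nonincreasing nonnegative real sequences in ℓ² with ‖a − b‖_{ℓ²} ≤ ε. Assume a_k ≤ C e^{−c k^β} for all k ≥ 1, with constants C, c, β > 0, and assume 0 < α < 2C. Then #{i : b_i ≥ α} ≤ 4ε²/α² + (c^{−1} ln(2C α^{−1}))^{1/β}. -/

import Mathlib

/-- **Counting lemma, exponential-decay case.** If `a, b` are nonincreasing nonnegative ℓ²
sequences with `‖a - b‖_{ℓ²} ≤ ε` and `a_k ≤ C e^{-c k^β}` for `k ≥ 1` (written 0-indexed),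
then for `0 < α < 2C` one has `#{i : b_i ≥ α} ≤ 4ε²/α² + (c⁻¹ ln(2C α⁻¹))^{1/β}`. -/
theorem count_above_threshold_exp
    (ε α : ℝ) (hε : 0 < ε)
    (a b : ℕ → ℝ) (ha : Antitone a) (hb : Antitone b)
    (ha0 : ∀ k, 0 ≤ a k) (hb0 : ∀ k, 0 ≤ b k)
    (hal2 : Memℓp a 2) (hbl2 : Memℓp b 2)
    (hdist : Real.sqrt (∑' k : ℕ, (a k - b k) ^ 2) ≤ ε)
    (C c β : ℝ) (hC : 0 < C) (hc : 0 < c) (hβ : 0 < β)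
    (hdecay : ∀ k : ℕ, a k ≤ C * Real.exp (-c * ((k : ℝ) + 1) ^ β))
    (hα0 : 0 < α) (hα2C : α < 2 * C) :
    (({i : ℕ | α ≤ b i}).ncard : ℝ)
      ≤ 4 * ε ^ 2 / α ^ 2 + (c⁻¹ * Real.log (2 * C * α⁻¹)) ^ (1/β) := by
  set S : Set ℕ := {i : ℕ | α ≤ b i} with hS
  set K : ℝ := (c⁻¹ * Real.log (2 * C * α⁻¹)) ^ (1/β) with hKdef
  have hβ' : β ≠ 0 := ne_of_gt hβ
  have h2Cα : (1:ℝ) ≤ 2 * C * α⁻¹ := by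
    rw [← div_eq_mul_inv, le_div_iff₀ hα0, one_mul]; linarith
  have hlog : 0 ≤ Real.log (2 * C * α⁻¹) := Real.log_nonneg h2Cα
  have hL : 0 ≤ c⁻¹ * Real.log (2 * C * α⁻¹) := by positivity
  have hK0 : 0 ≤ K := Real.rpow_nonneg hL _
  -- summability of (a-b)^2
  have htwo : (0:ℝ) < (2 : ENNReal).toReal := by norm_num
  have hsum : Summable (fun k => (a k - b k) ^ 2) := by
    have h := (hal2.sub hbl2).summable htwo
    have : ∀ k : ℕ, ‖(a - b) k‖ ^ (2 : ENNReal).toReal = (a k - b k) ^ 2 := by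
      intro k
      simp only [Pi.sub_apply, ENNReal.toReal_ofNat, Real.norm_eq_abs]
      rw [show ((2:ENNReal).toReal) = (2:ℝ) by norm_num] at *
      rw [Real.rpow_two, sq_abs]
    simpa [this] using h
  have hb2 : Summable (fun k => (b k) ^ 2) := by
    have h := hbl2.summable htwo
    have : ∀ k : ℕ, ‖b k‖ ^ (2 : ENNReal).toReal = (b k) ^ 2 := by
      intro k
      rw [show ((2:ENNReal).toReal) = (2:ℝ) by norm_num, Real.rpow_two,
        Real.norm_eq_abs, sq_abs]
    simpa [this] using h
  -- tsum bound
  have ht0 : 0 ≤ ∑' k : ℕ, (a k - b k) ^ 2 := tsum_nonneg fun k => sq_nonneg _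
  have htsum : ∑' k : ℕ, (a k - b k) ^ 2 ≤ ε ^ 2 := by
    calc ∑' k : ℕ, (a k - b k) ^ 2 = Real.sqrt (∑' k : ℕ, (a k - b k) ^ 2) ^ 2 :=
          (Real.sq_sqrt ht0).symm
      _ ≤ ε ^ 2 := pow_le_pow_left₀ (Real.sqrt_nonneg _) hdist 2
  -- S is finite
  have hSfin : S.Finite := by
    have htend : Filter.Tendsto (fun k => (b k) ^ 2) Filter.atTop (nhds 0) :=
      hb2.tendsto_atTop_zero
    have hev : ∀ᶠ k in Filter.atTop, (b k) ^ 2 < α ^ 2 := by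
      apply htend.eventually_lt_const; positivity
    obtain ⟨N₀, hN₀⟩ := Filter.eventually_atTop.1 hev
    refine (Set.finite_Iio N₀).subset fun i hi => ?_
    by_contra h
    rw [Set.mem_Iio] at h
    have h1 : (b i) ^ 2 < α ^ 2 := hN₀ i (le_of_not_gt (by simpa using h))
    have h2 : α ^ 2 ≤ (b i) ^ 2 := pow_le_pow_left₀ hα0.le hi 2
    linarith
  -- i₀
  set i₀ : ℕ := ⌈K - 1⌉₊ with hi₀def
  have hi₀K : (i₀ : ℝ) ≤ K := by
    rcases le_or_gt (K - 1) 0 with h | h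
    · have : i₀ = 0 := Nat.ceil_eq_zero.2 h
      rw [this]; exact_mod_cast hK0
    · have := Nat.ceil_lt_add_one h.le
      push_cast at this ⊢
      linarith
  have hKi : ∀ i : ℕ, i₀ ≤ i → K ≤ (i : ℝ) + 1 := by
    intro i hi
    have h1 : K - 1 ≤ (i₀ : ℝ) := Nat.le_ceil _
    have h2 : (i₀ : ℝ) ≤ i := Nat.cast_le.2 hi
    linarith
  -- key pointwise bound
  have hkey : ∀ i : ℕ, i₀ ≤ i → α ≤ b i → (α / 2) ^ 2 ≤ (a i - b i) ^ 2 := by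
    intro i hi hbi
    have h1 : c⁻¹ * Real.log (2 * C * α⁻¹) ≤ ((i : ℝ) + 1) ^ β := by
      have heq : c⁻¹ * Real.log (2 * C * α⁻¹) = K ^ β := by
        rw [hKdef, ← Real.rpow_mul hL, one_div, inv_mul_cancel₀ hβ', Real.rpow_one]
      rw [heq]
      exact Real.rpow_le_rpow hK0 (hKi i hi) hβ.le
    have h2 : Real.log (2 * C * α⁻¹) ≤ c * ((i : ℝ) + 1) ^ β := by
      have := mul_le_mul_of_nonneg_left h1 hc.le
      rwa [← mul_assoc, mul_inv_cancel₀ hc.ne', one_mul] at this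
    have h3 : Real.exp (-c * ((i : ℝ) + 1) ^ β) ≤ α / (2 * C) := by
      have hx : (0:ℝ) < 2 * C * α⁻¹ := by positivity
      have : Real.exp (-c * ((i : ℝ) + 1) ^ β) ≤ Real.exp (-(Real.log (2 * C * α⁻¹))) :=
        Real.exp_le_exp.2 (by rw [neg_mul]; linarith)
      rw [Real.exp_neg, Real.exp_log hx] at this
      have heq : (2 * C * α⁻¹)⁻¹ = α / (2 * C) := by
        field_simp
      rwa [heq] at this
    have h4 : a i ≤ α / 2 := by
      calc a i ≤ C * Real.exp (-c * ((i : ℝ) + 1) ^ β) := hdecay i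
        _ ≤ C * (α / (2 * C)) := mul_le_mul_of_nonneg_left h3 hC.le
        _ = α / 2 := by field_simp
    have h5 : α / 2 ≤ b i - a i := by linarith
    calc (α / 2) ^ 2 ≤ (b i - a i) ^ 2 := pow_le_pow_left₀ (by positivity) h5 2
      _ = (a i - b i) ^ 2 := by ring
  rcases S.eq_empty_or_nonempty with hSe | hSne
  · rw [hSe]
    simp only [Set.ncard_empty, Nat.cast_zero]
    positivity
  -- nonempty case: S = Iic m
  obtain ⟨j, hj⟩ := hSne
  have hFne : hSfin.toFinset.Nonempty := ⟨j, hSfin.mem_toFinset.2 hj⟩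
  set m : ℕ := hSfin.toFinset.max' hFne with hm
  have hmS : m ∈ S := hSfin.mem_toFinset.1 (hSfin.toFinset.max'_mem hFne)
  have hmem : ∀ i, i ∈ S ↔ i ≤ m := by
    intro i
    constructor
    · intro hi
      exact hSfin.toFinset.le_max' i (hSfin.mem_toFinset.2 hi)
    · intro hi
      exact le_trans hmS (hb hi)
  have hcard : S.ncard = m + 1 := by
    have : S = ↑(Finset.Iic m) := by
      ext i; simp [hmem i]
    rw [this, Set.ncard_coe_finset, Nat.card_Iic]
  rw [hcard]
  -- count indices in Icc i₀ m
  have hcount : ((Finset.Icc i₀ m).card : ℝ) * (α / 2) ^ 2 ≤ ε ^ 2 := by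
    have h1 : (Finset.Icc i₀ m).card • ((α / 2) ^ 2) ≤
        ∑ i ∈ Finset.Icc i₀ m, (a i - b i) ^ 2 := by
      apply Finset.card_nsmul_le_sum
      intro i hi
      obtain ⟨hi1, hi2⟩ := Finset.mem_Icc.1 hi
      exact hkey i hi1 ((hmem i).2 hi2)
    have h2 : ∑ i ∈ Finset.Icc i₀ m, (a i - b i) ^ 2 ≤ ∑' k : ℕ, (a k - b k) ^ 2 :=
      Summable.sum_le_tsum _ (fun k _ => sq_nonneg _) hsum
    calc ((Finset.Icc i₀ m).card : ℝ) * (α / 2) ^ 2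
        = (Finset.Icc i₀ m).card • ((α / 2) ^ 2) := by rw [nsmul_eq_mul]
      _ ≤ ∑ i ∈ Finset.Icc i₀ m, (a i - b i) ^ 2 := h1
      _ ≤ ∑' k : ℕ, (a k - b k) ^ 2 := h2
      _ ≤ ε ^ 2 := htsum
  have hα2 : (0:ℝ) < α ^ 2 := by positivity
  have hdiv : 4 * ε ^ 2 / α ^ 2 * α ^ 2 = 4 * ε ^ 2 := div_mul_cancel₀ _ hα2.ne'
  rcases le_or_gt i₀ m with hcase | hcase
  · have hcc : (Finset.Icc i₀ m).card = m + 1 - i₀ := Nat.card_Icc i₀ m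
    have hccR : ((Finset.Icc i₀ m).card : ℝ) = (m : ℝ) + 1 - i₀ := by
      rw [hcc]
      have : i₀ ≤ m + 1 := le_trans hcase (Nat.le_succ m)
      push_cast [this]
      ring
    rw [hccR] at hcount
    -- ((m+1) - i₀) * α²/4 ≤ ε², i₀ ≤ K ⊢ m+1 ≤ 4ε²/α² + K
    push_cast
    nlinarith [hcount, hi₀K, hdiv, hα2]
  · have : (m : ℝ) + 1 ≤ i₀ := by exact_mod_cast hcase
    have h4 : (0:ℝ) ≤ 4 * ε ^ 2 / α ^ 2 := by positivity
    push_cast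
    linarith [hi₀K]
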